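/- Let (G, G⁺) be a partially ordered abelian group with the strong Riesz interpolation property and let φ : G → G be an injective group homomorphism with φ(G⁺) ⊆ G⁺ and such that for every g ∈ G⁺ \ {0} one has φ(g) ∈ G⁺ \ {0}, and with the property that the inductive limit of the stationary system (G, φ) is realized as a group 𝒢 with positive cone 𝒢⁺ = ⋃_N φ_∞,N(G⁺) (where φ_∞,N are the canonical maps into the limit). Then (𝒢, 𝒢⁺) has the strong Riesz interpolation property. -/
import Mathlib


/-- The strong Riesz interpolation property for a positive cone `P` in an abelian
group: whenever `x₁, x₂ < y₁, y₂` (where `a < b` means `b - a ∈ P \ {0}`) there is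
`z` with `x_i < z < y_j` for all `i, j`. -/
def StrongRieszInterp {G : Type*} [AddCommGroup G] (P : Set G) : Prop :=
  ∀ x₁ x₂ y₁ y₂ : G,
    y₁ - x₁ ∈ P \ {0} → y₁ - x₂ ∈ P \ {0} → y₂ - x₁ ∈ P \ {0} → y₂ - x₂ ∈ P \ {0} →
      ∃ z : G, z - x₁ ∈ P \ {0} ∧ z - x₂ ∈ P \ {0} ∧
        y₁ - z ∈ P \ {0} ∧ y₂ - z ∈ P \ {0}

/-- Iterate of an additive endomorphism, as an `AddMonoidHom`. -/
def iterHom {G : Type*} [AddCommGroup G] (φ : G →+ G) : ℕ → G →+ G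
  | 0 => AddMonoidHom.id G
  | k + 1 => (iterHom φ k).comp φ

/-- The inductive limit of a stationary system of ordered abelian groups with the
strong Riesz interpolation property, along an injective positive map preserving
strict positivity, has the strong Riesz interpolation property. -/
theorem inductive_limit_strong_riesz_interpolation
    {G GInf : Type*} [AddCommGroup G] [AddCommGroup GInf]
    (P : Set G) (h0 : (0 : G) ∈ P)
    (hadd : ∀ a ∈ P, ∀ b ∈ P, a + b ∈ P)
    (hcone : ∀ a : G, a ∈ P → -a ∈ P → a = 0)
    (hinterp : StrongRieszInterp P)
    (φ : G →+ G) (hφinj : Function.Injective φ)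
    (hφpos : ∀ g ∈ P, φ g ∈ P)
    (hφstrict : ∀ g ∈ P, g ≠ 0 → φ g ∈ P ∧ φ g ≠ 0)
    (j : ℕ → G →+ GInf)
    (hcompat : ∀ N, j N = (j (N + 1)).comp φ)
    (hjinj : ∀ N, Function.Injective (j N))
    (hsurj : ∀ x : GInf, ∃ N g, j N g = x) :
    StrongRieszInterp (⋃ N, (j N) '' P) := by
  classical
  set ψ : ℕ → G →+ G := iterHom φ with hψ
  have ψ_succ : ∀ k g, ψ (k + 1) g = ψ k (φ g) := fun k g => rfl
  have shift : ∀ k L (g : G), j L g = j (L + k) (ψ k g) := by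
    intro k
    induction k with
    | zero => intro L g; rfl
    | succ k ih =>
      intro L g
      have h1 : j L g = j (L + 1) (φ g) := by rw [hcompat L]; rfl
      rw [h1, ih (L + 1) (φ g), ψ_succ]
      have hE : L + 1 + k = L + (k + 1) := by omega
      rw [hE]
  have ψP : ∀ k g, g ∈ P → ψ k g ∈ P := by
    intro k
    induction k with
    | zero => intro g hg; exact hg
    | succ k ih => intro g hg; rw [ψ_succ]; exact ih _ (hφpos g hg)
  intro x₁ x₂ y₁ y₂ h11 h12 h21 h22
  obtain ⟨N₁, a₁, rfl⟩ := hsurj x₁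
  obtain ⟨N₂, a₂, rfl⟩ := hsurj x₂
  obtain ⟨N₃, b₁, rfl⟩ := hsurj y₁
  obtain ⟨N₄, b₂, rfl⟩ := hsurj y₂
  obtain ⟨h11m, h11ne⟩ := h11
  obtain ⟨h12m, h12ne⟩ := h12
  obtain ⟨h21m, h21ne⟩ := h21
  obtain ⟨h22m, h22ne⟩ := h22
  simp only [Set.mem_iUnion, Set.mem_image] at h11m h12m h21m h22m
  obtain ⟨M₁₁, p₁₁, hp11, hq11⟩ := h11m
  obtain ⟨M₁₂, p₁₂, hp12, hq12⟩ := h12m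
  obtain ⟨M₂₁, p₂₁, hp21, hq21⟩ := h21m
  obtain ⟨M₂₂, p₂₂, hp22, hq22⟩ := h22m
  obtain ⟨N, hN1, hN2, hN3, hN4, hM11, hM12, hM21, hM22⟩ :
      ∃ N, N₁ ≤ N ∧ N₂ ≤ N ∧ N₃ ≤ N ∧ N₄ ≤ N ∧
        M₁₁ ≤ N ∧ M₁₂ ≤ N ∧ M₂₁ ≤ N ∧ M₂₂ ≤ N :=
    ⟨N₁ + N₂ + N₃ + N₄ + M₁₁ + M₁₂ + M₂₁ + M₂₂, by omega⟩
  have key : ∀ L (g : G), L ≤ N → j L g = j N (ψ (N - L) g) := by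
    intro L g hL
    have hE : L + (N - L) = N := by omega
    have h := shift (N - L) L g
    rw [hE] at h
    exact h
  set A₁ := ψ (N - N₁) a₁ with hA₁
  set A₂ := ψ (N - N₂) a₂ with hA₂
  set B₁ := ψ (N - N₃) b₁ with hB₁
  set B₂ := ψ (N - N₄) b₂ with hB₂
  have hx₁ : j N₁ a₁ = j N A₁ := key N₁ a₁ hN1
  have hx₂ : j N₂ a₂ = j N A₂ := key N₂ a₂ hN2
  have hy₁ : j N₃ b₁ = j N B₁ := key N₃ b₁ hN3
  have hy₂ : j N₄ b₂ = j N B₂ := key N₄ b₂ hN4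
  have hdiff : ∀ (M : ℕ) (p : G) (u v : G), p ∈ P → M ≤ N →
      j M p = j N u - j N v → u - v ∈ P := by
    intro M p u v hp hM hEq
    have h1 : j N (ψ (N - M) p) = j N (u - v) := by
      rw [← key M p hM, hEq, map_sub]
    have h2 : ψ (N - M) p = u - v := hjinj N h1
    rw [← h2]
    exact ψP _ _ hp
  have d11 : B₁ - A₁ ∈ P := hdiff M₁₁ p₁₁ B₁ A₁ hp11 hM11 (by rw [hq11, hx₁, hy₁])
  have d12 : B₁ - A₂ ∈ P := hdiff M₁₂ p₁₂ B₁ A₂ hp12 hM12 (by rw [hq12, hx₂, hy₁])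
  have d21 : B₂ - A₁ ∈ P := hdiff M₂₁ p₂₁ B₂ A₁ hp21 hM21 (by rw [hq21, hx₁, hy₂])
  have d22 : B₂ - A₂ ∈ P := hdiff M₂₂ p₂₂ B₂ A₂ hp22 hM22 (by rw [hq22, hx₂, hy₂])
  have nz : ∀ (u v : G), (j N u - j N v ≠ 0) → u - v ≠ 0 := by
    intro u v h hc
    apply h
    rw [← map_sub, hc, map_zero]
  have e11 : B₁ - A₁ ≠ 0 := nz _ _ (by rw [← hx₁, ← hy₁]; exact h11ne)
  have e12 : B₁ - A₂ ≠ 0 := nz _ _ (by rw [← hx₂, ← hy₁]; exact h12ne)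
  have e21 : B₂ - A₁ ≠ 0 := nz _ _ (by rw [← hx₁, ← hy₂]; exact h21ne)
  have e22 : B₂ - A₂ ≠ 0 := nz _ _ (by rw [← hx₂, ← hy₂]; exact h22ne)
  obtain ⟨z, ⟨hz1, hz1n⟩, ⟨hz2, hz2n⟩, ⟨hz3, hz3n⟩, ⟨hz4, hz4n⟩⟩ :=
    hinterp A₁ A₂ B₁ B₂ ⟨d11, e11⟩ ⟨d12, e12⟩ ⟨d21, e21⟩ ⟨d22, e22⟩
  have final : ∀ w : G, w ∈ P → w ≠ 0 → j N w ∈ (⋃ M, (j M) '' P) \ {0} := by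
    intro w hw hwne
    constructor
    · exact Set.mem_iUnion.2 ⟨N, Set.mem_image_of_mem _ hw⟩
    · simp only [Set.mem_singleton_iff]
      intro hc
      exact hwne (hjinj N (by rw [hc, map_zero]))
  refine ⟨j N z, ?_, ?_, ?_, ?_⟩
  · rw [hx₁, ← map_sub]; exact final _ hz1 hz1n
  · rw [hx₂, ← map_sub]; exact final _ hz2 hz2n
  · rw [hy₁, ← map_sub]; exact final _ hz3 hz3n
  · rw [hy₂, ← map_sub]; exact final _ hz4 hz4n
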